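/- Let V be a finite nonempty type and n ≥ 1, let q be a full-support probability vector on the function type Fin n → V, let R : (Fin n → V) → ℝ, and let β > 0. Set Z = ∑_z q(z)·exp(R(z)/β) and p(z) = q(z)·exp(R(z)/β)/Z. For a probability vector μ on Fin n → V and 0 ≤ i ≤ n, define the prefix marginal μ_i(y) = ∑_{z : z agrees with y on all coordinates j with j < i} μ(z) (so μ_0(y) = 1), and for 1 ≤ i ≤ n define the i-th conditional c_i^μ(y) = μ_i(y)/μ_{i−1}(y). Then the sequence-level reward decomposes into a sum of token-level log-ratio rewards: for every y : Fin n → V, R(y) = β·∑_{i=1}^{n} log( c_i^p(y) / c_i^q(y) ) + β·log Z. -/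
import Mathlib


open Finset Real

/-- The sequence-level reward of an exponentially tilted sequence distribution decomposes
into a sum of token-level log-ratio rewards plus `β * log Z`. -/
theorem token_level_reward_decomposition
    {V : Type*} [Fintype V] [Nonempty V] [DecidableEq V]
    (n : ℕ) (hn : 1 ≤ n)
    (q : (Fin n → V) → ℝ) (hq_pos : ∀ z, 0 < q z) (hq_sum : ∑ z, q z = 1)
    (R : (Fin n → V) → ℝ) (β : ℝ) (hβ : 0 < β)
    (Z : ℝ) (hZ : Z = ∑ z, q z * Real.exp (R z / β))
    (p : (Fin n → V) → ℝ) (hp : ∀ z, p z = q z * Real.exp (R z / β) / Z)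
    (marg : ((Fin n → V) → ℝ) → ℕ → (Fin n → V) → ℝ)
    (hmarg : ∀ μ i y, marg μ i y =
      ∑ z ∈ Finset.univ.filter (fun z : Fin n → V => ∀ j : Fin n, (j : ℕ) < i → z j = y j), μ z) :
    ∀ y : Fin n → V,
      R y = β * ∑ i ∈ Finset.range n,
          Real.log ((marg p (i + 1) y / marg p i y) / (marg q (i + 1) y / marg q i y)) +
        β * Real.log Z := by
  intro y
  have hZpos : 0 < Z := by
    rw [hZ]
    exact Finset.sum_pos (fun z _ => mul_pos (hq_pos z) (Real.exp_pos _))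
      Finset.univ_nonempty
  have hp_pos : ∀ z, 0 < p z := fun z => by
    rw [hp]; exact div_pos (mul_pos (hq_pos z) (Real.exp_pos _)) hZpos
  -- marginals at n : filter = {y}
  have hfiltn : ∀ μ : (Fin n → V) → ℝ, marg μ n y = μ y := by
    intro μ
    rw [hmarg]
    have hset : (Finset.univ.filter (fun z : Fin n → V => ∀ j : Fin n, (j : ℕ) < n → z j = y j))
        = {y} := by
      ext z
      simp only [Finset.mem_filter, Finset.mem_univ, true_and, Finset.mem_singleton]
      constructor
      · intro h; funext j; exact h j j.isLt
      · intro h j _; rw [h]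
    rw [hset, Finset.sum_singleton]
  have hfilt0 : ∀ μ : (Fin n → V) → ℝ, marg μ 0 y = ∑ z, μ z := by
    intro μ
    rw [hmarg]
    congr 1
    ext z
    simp
  have hmpos : ∀ (μ : (Fin n → V) → ℝ), (∀ z, 0 < μ z) → ∀ i, 0 < marg μ i y := by
    intro μ hμ i
    rw [hmarg]
    refine Finset.sum_pos (fun z _ => hμ z) ⟨y, ?_⟩
    simp
  have hpsum : ∑ z, p z = 1 := by
    simp only [hp]
    rw [← Finset.sum_div, ← hZ, div_self hZpos.ne']
  -- rewrite each log term
  have hterm : ∀ i ∈ Finset.range n,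
      Real.log ((marg p (i + 1) y / marg p i y) / (marg q (i + 1) y / marg q i y))
      = (Real.log (marg p (i + 1) y) - Real.log (marg p i y))
        - (Real.log (marg q (i + 1) y) - Real.log (marg q i y)) := by
    intro i _
    rw [Real.log_div (div_pos (hmpos p hp_pos _) (hmpos p hp_pos _)).ne'
        (div_pos (hmpos q hq_pos _) (hmpos q hq_pos _)).ne',
      Real.log_div (hmpos p hp_pos _).ne' (hmpos p hp_pos _).ne',
      Real.log_div (hmpos q hq_pos _).ne' (hmpos q hq_pos _).ne']
  rw [Finset.sum_congr rfl hterm, Finset.sum_sub_distrib,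
    Finset.sum_range_sub (fun i => Real.log (marg p i y)),
    Finset.sum_range_sub (fun i => Real.log (marg q i y)),
    hfiltn, hfiltn, hfilt0, hfilt0, hpsum, hq_sum]
  have hlogp : Real.log (p y) = Real.log (q y) + R y / β - Real.log Z := by
    rw [hp, Real.log_div (mul_pos (hq_pos y) (Real.exp_pos _)).ne' hZpos.ne',
      Real.log_mul (hq_pos y).ne' (Real.exp_pos _).ne', Real.log_exp]
  rw [Real.log_one, hlogp]
  field_simp
  ring
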